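/- (Local dependence measure, degenerate case.) Suppose θ₁+θ₂ = θ₁′. Then for all a < y₁ < y₂ < b, the local dependence measure β(y₁,y₂) = F(y₁,y₂)·f(y₁,y₂) / (F₁(y₁,y₂)·F₂(y₁,y₂)), where F₁ = ∂F/∂y₁ and F₂ = ∂F/∂y₂, equals [θ₁′ + θ₂ θ₁′ ln(F₀(y₂)/F₀(y₁))] / [θ₁ + θ₂ θ₁′ ln(F₀(y₂)/F₀(y₁))]. -/

import Mathlib

open MeasureTheory Set

noncomputable def dprh (a b : ℝ) (F₀ f₀ : ℝ → ℝ) (θ₁ θ₂ θ₁' θ₂' : ℝ) (y₁ y₂ : ℝ) : ℝ :=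
  if a < y₁ ∧ y₁ < y₂ ∧ y₂ < b then
    θ₁' * θ₂ * f₀ y₁ * f₀ y₂ * F₀ y₁ ^ (θ₁' - 1) * F₀ y₂ ^ (θ₁ + θ₂ - θ₁' - 1)
  else if a < y₂ ∧ y₂ < y₁ ∧ y₁ < b then
    θ₁ * θ₂' * f₀ y₁ * f₀ y₂ * F₀ y₁ ^ (θ₁ + θ₂ - θ₂' - 1) * F₀ y₂ ^ (θ₂' - 1)
  else 0

lemma my_integral_congr_Ioo {f g : ℝ → ℝ} {u w : ℝ} (hle : u ≤ w)
    (h : ∀ x ∈ Ioo u w, f x = g x) :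
    ∫ x in u..w, f x = ∫ x in u..w, g x := by
  rw [intervalIntegral.integral_of_le hle, intervalIntegral.integral_of_le hle,
    integral_Ioc_eq_integral_Ioo, integral_Ioc_eq_integral_Ioo]
  exact setIntegral_congr_fun measurableSet_Ioo h

lemma my_intervalIntegrable_congr_Ioo {f g : ℝ → ℝ} {u w : ℝ} (hle : u ≤ w)
    (h : ∀ x ∈ Ioo u w, g x = f x) (hg : IntervalIntegrable g volume u w) :
    IntervalIntegrable f volume u w := by
  rw [intervalIntegrable_iff_integrableOn_Ioo_of_le hle] at hg ⊢
  exact hg.congr_fun h measurableSet_Ioo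

lemma ftc0 {Φ φ : ℝ → ℝ} {a s : ℝ} (has : a < s)
    (hd : ∀ x ∈ Ioc a s, HasDerivAt Φ (φ x) x)
    (hnn : ∀ x ∈ Ioo a s, 0 ≤ φ x)
    (hlim : Filter.Tendsto Φ (nhdsWithin a (Ioi a)) (nhds 0)) :
    IntervalIntegrable φ volume a s ∧ (∫ x in a..s, φ x) = Φ s := by
  set Ψ : ℝ → ℝ := fun x => if x ≤ a then 0 else Φ x with hΨdef
  have hΨa : Ψ a = 0 := by simp [hΨdef]
  have hΨeq : ∀ x, a < x → Ψ x = Φ x := fun x hx => by simp [hΨdef, not_le.2 hx]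
  have hev : ∀ x, a < x → Ψ =ᶠ[nhds x] Φ := by
    intro x hx
    filter_upwards [Ioi_mem_nhds hx] with y hy using hΨeq y hy
  have hΨd : ∀ x ∈ Ioc a s, HasDerivAt Ψ (φ x) x := fun x hx =>
    (hd x hx).congr_of_eventuallyEq (hev x hx.1)
  have hcont : ContinuousOn Ψ (Icc a s) := by
    intro x hx
    rcases hx.1.eq_or_lt with h | hax
    · rw [← h]
      have h1 : ContinuousWithinAt Ψ (Ioi a) a := by
        rw [ContinuousWithinAt, hΨa]
        refine hlim.congr' ?_
        filter_upwards [self_mem_nhdsWithin] with y hy using (hΨeq y hy).symm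
      have h2 : ContinuousWithinAt Ψ (insert a (Ioi a)) a :=
        continuousWithinAt_insert_self.2 h1
      refine h2.mono fun y (hy : y ∈ Icc a s) => ?_
      rcases hy.1.eq_or_lt with h' | h'
      · exact mem_insert_iff.2 (Or.inl h'.symm)
      · exact mem_insert_iff.2 (Or.inr h')
    · exact ((hΨd x ⟨hax, hx.2⟩).continuousAt).continuousWithinAt
  have hint : IntervalIntegrable φ volume a s := by
    rw [intervalIntegrable_iff_integrableOn_Ioc_of_le has.le]
    exact intervalIntegral.integrableOn_deriv_of_nonneg hcont
      (fun x hx => hΨd x ⟨hx.1, hx.2.le⟩) hnn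
  refine ⟨hint, ?_⟩
  have := intervalIntegral.integral_eq_sub_of_hasDeriv_right_of_le has.le hcont
    (fun x hx => (hΨd x ⟨hx.1, hx.2.le⟩).hasDerivWithinAt) hint
  rw [this, hΨa, hΨeq s has, sub_zero]

lemma hasDerivAt_H {F₀ f₀ : ℝ → ℝ} {x : ℝ} (hF : HasDerivAt F₀ (f₀ x) x) (hpos : 0 < F₀ x)
    (p θ₂ Lw : ℝ) :
    HasDerivAt (fun u => F₀ u ^ p * (1 + θ₂ * (Lw - Real.log (F₀ u))))
      (f₀ x * F₀ x ^ (p - 1) * ((p - θ₂) + p * θ₂ * (Lw - Real.log (F₀ x)))) x := by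
  have h1 : HasDerivAt (fun u => F₀ u ^ p) (f₀ x * p * F₀ x ^ (p - 1)) x :=
    hF.rpow_const (Or.inl hpos.ne')
  have h2 : HasDerivAt (fun u => 1 + θ₂ * (Lw - Real.log (F₀ u)))
      (θ₂ * -(f₀ x / F₀ x)) x :=
    ((((hF.log hpos.ne').const_sub Lw)).const_mul θ₂).const_add 1
  have h3 := h1.mul h2
  refine h3.congr_deriv ?_
  rw [Real.rpow_sub_one hpos.ne']
  field_simp
  ring

lemma dprh_cdf (a b : ℝ) (F₀ f₀ : ℝ → ℝ)
    (hderiv : ∀ y ∈ Ioo a b, HasDerivAt F₀ (f₀ y) y)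
    (hmono : StrictMonoOn F₀ (Ioo a b))
    (hf₀pos : ∀ y ∈ Ioo a b, 0 < f₀ y)
    (hF₀pos : ∀ y ∈ Ioo a b, 0 < F₀ y)
    (hFa : Filter.Tendsto F₀ (nhdsWithin a (Ioi a)) (nhds 0))
    (θ₁ θ₂ θ₁' θ₂' : ℝ) (hθ₁ : 0 < θ₁) (hθ₂ : 0 < θ₂) (hθ₁' : 0 < θ₁') (hθ₂' : 0 < θ₂')
    (heq : θ₁ + θ₂ = θ₁') (s w : ℝ) (has : a < s) (hsw : s < w) (hwb : w < b) :
    (∫ u in a..s, ∫ v in a..w, dprh a b F₀ f₀ θ₁ θ₂ θ₁' θ₂' u v)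
      = F₀ s ^ θ₁' * (1 + θ₂ * (Real.log (F₀ w) - Real.log (F₀ s))) := by
  have hab : a < b := has.trans (hsw.trans hwb)
  have hwmem : w ∈ Ioo a b := ⟨has.trans hsw, hwb⟩
  set Lw := Real.log (F₀ w) with hLw
  have inner : ∀ u ∈ Ioo a s, (∫ v in a..w, dprh a b F₀ f₀ θ₁ θ₂ θ₁' θ₂' u v)
      = f₀ u * F₀ u ^ (θ₁' - 1) * (θ₁ + θ₁' * θ₂ * (Lw - Real.log (F₀ u))) := by
    intro u hu
    have hub : u ∈ Ioo a b := ⟨hu.1, (hu.2.trans hsw).trans hwb⟩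
    have huw : u < w := hu.2.trans hsw
    have hFu : 0 < F₀ u := hF₀pos u hub
    have hfu : 0 < f₀ u := hf₀pos u hub
    set C₁ := θ₁ * θ₂' * f₀ u * F₀ u ^ (θ₁ + θ₂ - θ₂' - 1) with hC₁
    set φ₁ : ℝ → ℝ := fun v => C₁ * (f₀ v * F₀ v ^ (θ₂' - 1)) with hφ₁
    set Φ₁ : ℝ → ℝ := fun v => C₁ * (F₀ v ^ θ₂' / θ₂') with hΦ₁
    have hC₁nn : 0 ≤ C₁ := by rw [hC₁]; positivity
    have hd₁ : ∀ x ∈ Ioc a u, HasDerivAt Φ₁ (φ₁ x) x := by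
      intro x hx
      have hxb : x ∈ Ioo a b := ⟨hx.1, lt_of_le_of_lt hx.2 (huw.trans hwb)⟩
      have hFx := hF₀pos x hxb
      have h := (((hderiv x hxb).rpow_const (p := θ₂') (Or.inl hFx.ne')).div_const θ₂').const_mul C₁
      rw [hΦ₁]
      refine h.congr_deriv ?_
      rw [hφ₁]
      field_simp
    have hnn₁ : ∀ x ∈ Ioo a u, 0 ≤ φ₁ x := by
      intro x hx
      have hxb : x ∈ Ioo a b := ⟨hx.1, (hx.2.trans huw).trans hwb⟩
      have h1 := (hf₀pos x hxb).le
      have h2 := Real.rpow_nonneg (hF₀pos x hxb).le (θ₂' - 1)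
      rw [hφ₁]
      positivity
    have hlim₁ : Filter.Tendsto Φ₁ (nhdsWithin a (Ioi a)) (nhds 0) := by
      have hc : ContinuousAt (fun t : ℝ => t ^ θ₂') 0 :=
        Real.continuousAt_rpow_const 0 θ₂' (Or.inr hθ₂'.le)
      have h0 : Filter.Tendsto (fun t : ℝ => C₁ * (t ^ θ₂' / θ₂')) (nhds 0) (nhds 0) := by
        have h1 : Filter.Tendsto (fun t : ℝ => t ^ θ₂') (nhds 0) (nhds 0) := by
          simpa [Real.zero_rpow hθ₂'.ne'] using hc.tendsto
        simpa using (h1.div_const θ₂').const_mul C₁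
      exact (h0.comp hFa).congr (fun v => rfl)
    have H₁ := ftc0 hu.1 hd₁ hnn₁ hlim₁
    set C₂ := θ₁' * θ₂ * f₀ u * F₀ u ^ (θ₁' - 1) with hC₂
    set φ₂ : ℝ → ℝ := fun v => C₂ * (f₀ v / F₀ v) with hφ₂
    set Φ₂ : ℝ → ℝ := fun v => C₂ * Real.log (F₀ v) with hΦ₂
    have hC₂nn : 0 ≤ C₂ := by rw [hC₂]; positivity
    have hd₂ : ∀ x ∈ Set.uIcc u w, HasDerivAt Φ₂ (φ₂ x) x := by
      intro x hx
      rw [Set.uIcc_of_le huw.le] at hx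
      have hxb : x ∈ Ioo a b := ⟨hu.1.trans_le hx.1, lt_of_le_of_lt hx.2 hwb⟩
      rw [hΦ₂]
      exact ((hderiv x hxb).log (hF₀pos x hxb).ne').const_mul C₂
    have hint₂ : IntervalIntegrable φ₂ volume u w := by
      apply intervalIntegral.intervalIntegrable_deriv_of_nonneg (g := Φ₂)
      · exact fun x hx => (hd₂ x hx).continuousAt.continuousWithinAt
      · intro x hx
        rw [min_eq_left huw.le, max_eq_right huw.le] at hx
        exact hd₂ x (by rw [Set.uIcc_of_le huw.le]; exact Ioo_subset_Icc_self hx)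
      · intro x hx
        rw [min_eq_left huw.le, max_eq_right huw.le] at hx
        have hxb : x ∈ Ioo a b := ⟨hu.1.trans hx.1, hx.2.trans hwb⟩
        have h1 := (hf₀pos x hxb).le
        have h2 := (hF₀pos x hxb).le
        rw [hφ₂]
        positivity
    have hval₂ : ∫ v in u..w, φ₂ v = C₂ * (Lw - Real.log (F₀ u)) := by
      rw [intervalIntegral.integral_eq_sub_of_hasDerivAt hd₂ hint₂]
      rw [hΦ₂, hLw]
      ring
    have hcong₁ : ∀ v ∈ Ioo a u, φ₁ v = dprh a b F₀ f₀ θ₁ θ₂ θ₁' θ₂' u v := by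
      intro v hv
      have hn : ¬(a < u ∧ u < v ∧ v < b) := by
        rintro ⟨_, h', _⟩; exact absurd (hv.2.trans h') (lt_irrefl v)
      simp only [dprh]
      rw [if_neg hn, if_pos ⟨hv.1, hv.2, hub.2⟩, hφ₁, hC₁]
      ring
    have hcong₂ : ∀ v ∈ Ioo u w, φ₂ v = dprh a b F₀ f₀ θ₁ θ₂ θ₁' θ₂' u v := by
      intro v hv
      have hc : a < u ∧ u < v ∧ v < b := ⟨hu.1, hv.1, hv.2.trans hwb⟩
      have he : θ₁ + θ₂ - θ₁' - 1 = (-1 : ℝ) := by rw [heq]; ring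
      simp only [dprh]
      rw [if_pos hc, he, Real.rpow_neg_one, hφ₂, hC₂]
      ring
    have hint₁' : IntervalIntegrable (fun v => dprh a b F₀ f₀ θ₁ θ₂ θ₁' θ₂' u v) volume a u :=
      my_intervalIntegrable_congr_Ioo hu.1.le hcong₁ H₁.1
    have hint₂' : IntervalIntegrable (fun v => dprh a b F₀ f₀ θ₁ θ₂ θ₁' θ₂' u v) volume u w :=
      my_intervalIntegrable_congr_Ioo huw.le hcong₂ hint₂
    rw [← intervalIntegral.integral_add_adjacent_intervals hint₁' hint₂',
      my_integral_congr_Ioo hu.1.le (fun x hx => (hcong₁ x hx).symm),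
      my_integral_congr_Ioo huw.le (fun x hx => (hcong₂ x hx).symm),
      H₁.2, hval₂]
    have hr : F₀ u ^ (θ₁ + θ₂ - θ₂' - 1) * F₀ u ^ θ₂' = F₀ u ^ (θ₁' - 1) := by
      rw [← Real.rpow_add hFu, ← heq]; ring_nf
    have e1 : C₁ * (F₀ u ^ θ₂' / θ₂') = θ₁ * f₀ u * F₀ u ^ (θ₁' - 1) := by
      rw [hC₁]; field_simp; linear_combination hr
    rw [show Φ₁ u = C₁ * (F₀ u ^ θ₂' / θ₂') from rfl, e1, hC₂]
    ring
  -- outer integral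
  have hdH : ∀ x ∈ Ioc a s, HasDerivAt
      (fun u => F₀ u ^ θ₁' * (1 + θ₂ * (Lw - Real.log (F₀ u))))
      (f₀ x * F₀ x ^ (θ₁' - 1) * (θ₁ + θ₁' * θ₂ * (Lw - Real.log (F₀ x)))) x := by
    intro x hx
    have hxb : x ∈ Ioo a b := ⟨hx.1, (hx.2.trans_lt hsw).trans hwb⟩
    have h := hasDerivAt_H (hderiv x hxb) (hF₀pos x hxb) θ₁' θ₂ Lw
    convert h using 2
    rw [← heq]; ring
  have hnng : ∀ x ∈ Ioo a s,
      0 ≤ f₀ x * F₀ x ^ (θ₁' - 1) * (θ₁ + θ₁' * θ₂ * (Lw - Real.log (F₀ x))) := by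
    intro x hx
    have hxb : x ∈ Ioo a b := ⟨hx.1, (hx.2.trans hsw).trans hwb⟩
    have hlog : Real.log (F₀ x) < Lw := by
      rw [hLw]
      exact Real.log_lt_log (hF₀pos x hxb) (hmono hxb hwmem (hx.2.trans hsw))
    have h1 : (0:ℝ) ≤ Lw - Real.log (F₀ x) := by linarith
    exact mul_nonneg (mul_nonneg (hf₀pos x hxb).le (Real.rpow_nonneg (hF₀pos x hxb).le _))
      (add_nonneg hθ₁.le (mul_nonneg (mul_nonneg hθ₁'.le hθ₂.le) h1))
  have hlimH : Filter.Tendsto (fun u => F₀ u ^ θ₁' * (1 + θ₂ * (Lw - Real.log (F₀ u))))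
      (nhdsWithin a (Ioi a)) (nhds 0) := by
    have hF0 : Filter.Tendsto F₀ (nhdsWithin a (Ioi a)) (nhdsWithin 0 (Ioi 0)) := by
      rw [tendsto_nhdsWithin_iff]
      refine ⟨hFa, ?_⟩
      filter_upwards [Ioo_mem_nhdsGT hab] with y hy using hF₀pos y hy
    have h1 : Filter.Tendsto
        (fun t : ℝ => t ^ θ₁' * (1 + θ₂ * Lw) + (-θ₂) * (Real.log t * t ^ θ₁'))
        (nhdsWithin 0 (Ioi 0)) (nhds 0) := by
      have ha : Filter.Tendsto (fun t : ℝ => t ^ θ₁') (nhdsWithin 0 (Ioi 0)) (nhds 0) := by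
        have hc : ContinuousAt (fun t : ℝ => t ^ θ₁') 0 :=
          Real.continuousAt_rpow_const 0 θ₁' (Or.inr hθ₁'.le)
        have h2 := hc.tendsto
        rw [Real.zero_rpow hθ₁'.ne'] at h2
        exact h2.mono_left nhdsWithin_le_nhds
      have hb := tendsto_log_mul_rpow_nhdsGT_zero hθ₁'
      have h3 := (ha.mul_const (1 + θ₂ * Lw)).add (hb.const_mul (-θ₂))
      simpa using h3
    refine (h1.comp hF0).congr (fun u => ?_)
    simp only [Function.comp_apply]
    ring
  rw [my_integral_congr_Ioo has.le inner]
  exact (ftc0 has hdH hnng hlimH).2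

theorem dprh_local_dependence_degenerate
    (a b : ℝ) (hab : a < b) (F₀ f₀ : ℝ → ℝ)
    (hderiv : ∀ y ∈ Ioo a b, HasDerivAt F₀ (f₀ y) y)
    (hf₀cont : ContinuousOn f₀ (Ioo a b))
    (hmono : StrictMonoOn F₀ (Ioo a b))
    (hf₀pos : ∀ y ∈ Ioo a b, 0 < f₀ y)
    (hF₀pos : ∀ y ∈ Ioo a b, 0 < F₀ y)
    (hF₀lt1 : ∀ y ∈ Ioo a b, F₀ y < 1)
    (hFa : Filter.Tendsto F₀ (nhdsWithin a (Ioi a)) (nhds 0))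
    (hFb : Filter.Tendsto F₀ (nhdsWithin b (Iio b)) (nhds 1))
    (θ₁ θ₂ θ₁' θ₂' : ℝ) (hθ₁ : 0 < θ₁) (hθ₂ : 0 < θ₂) (hθ₁' : 0 < θ₁') (hθ₂' : 0 < θ₂')
    (heq : θ₁ + θ₂ = θ₁') (y₁ y₂ : ℝ) (h₁ : a < y₁) (h₂ : y₁ < y₂) (h₃ : y₂ < b)
    :
    (∫ u in a..y₁, ∫ v in a..y₂, dprh a b F₀ f₀ θ₁ θ₂ θ₁' θ₂' u v) * dprh a b F₀ f₀ θ₁ θ₂ θ₁' θ₂' y₁ y₂ /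
      (deriv (fun s => ∫ u in a..s, ∫ v in a..y₂, dprh a b F₀ f₀ θ₁ θ₂ θ₁' θ₂' u v) y₁ *
        deriv (fun t => ∫ u in a..y₁, ∫ v in a..t, dprh a b F₀ f₀ θ₁ θ₂ θ₁' θ₂' u v) y₂) =
      (θ₁' + θ₂ * θ₁' * Real.log (F₀ y₂ / F₀ y₁)) /
        (θ₁ + θ₂ * θ₁' * Real.log (F₀ y₂ / F₀ y₁)) := by
  have hy₁ : y₁ ∈ Ioo a b := ⟨h₁, h₂.trans h₃⟩
  have hy₂ : y₂ ∈ Ioo a b := ⟨h₁.trans h₂, h₃⟩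
  have hP : 0 < F₀ y₁ := hF₀pos y₁ hy₁
  have hQ : 0 < F₀ y₂ := hF₀pos y₂ hy₂
  have hf₁ : 0 < f₀ y₁ := hf₀pos y₁ hy₁
  have hf₂ : 0 < f₀ y₂ := hf₀pos y₂ hy₂
  set L := Real.log (F₀ y₂) - Real.log (F₀ y₁) with hL
  have hLpos : 0 < L := by
    rw [hL]
    have := Real.log_lt_log hP (hmono hy₁ hy₂ h₂)
    linarith
  have hlogdiv : Real.log (F₀ y₂ / F₀ y₁) = L := Real.log_div hQ.ne' hP.ne'
  have hF : (∫ u in a..y₁, ∫ v in a..y₂, dprh a b F₀ f₀ θ₁ θ₂ θ₁' θ₂' u v)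
      = F₀ y₁ ^ θ₁' * (1 + θ₂ * L) :=
    dprh_cdf a b F₀ f₀ hderiv hmono hf₀pos hF₀pos hFa θ₁ θ₂ θ₁' θ₂' hθ₁ hθ₂ hθ₁' hθ₂'
      heq y₁ y₂ h₁ h₂ h₃
  have hf : dprh a b F₀ f₀ θ₁ θ₂ θ₁' θ₂' y₁ y₂
      = θ₁' * θ₂ * f₀ y₁ * f₀ y₂ * F₀ y₁ ^ (θ₁' - 1) * (F₀ y₂)⁻¹ := by
    have he : θ₁ + θ₂ - θ₁' - 1 = (-1:ℝ) := by rw [heq]; ring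
    simp only [dprh]
    rw [if_pos ⟨h₁, h₂, h₃⟩, he, Real.rpow_neg_one]
  have hD1 : deriv (fun s => ∫ u in a..s, ∫ v in a..y₂, dprh a b F₀ f₀ θ₁ θ₂ θ₁' θ₂' u v) y₁
      = f₀ y₁ * F₀ y₁ ^ (θ₁' - 1) * (θ₁ + θ₁' * θ₂ * L) := by
    have hev : (fun s => ∫ u in a..s, ∫ v in a..y₂, dprh a b F₀ f₀ θ₁ θ₂ θ₁' θ₂' u v)
        =ᶠ[nhds y₁] (fun s => F₀ s ^ θ₁' * (1 + θ₂ * (Real.log (F₀ y₂) - Real.log (F₀ s)))) := by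
      filter_upwards [Ioo_mem_nhds h₁ h₂] with s hs
      exact dprh_cdf a b F₀ f₀ hderiv hmono hf₀pos hF₀pos hFa θ₁ θ₂ θ₁' θ₂' hθ₁ hθ₂ hθ₁' hθ₂'
        heq s y₂ hs.1 hs.2 h₃
    rw [hev.deriv_eq]
    have h := hasDerivAt_H (hderiv y₁ hy₁) hP θ₁' θ₂ (Real.log (F₀ y₂))
    rw [h.deriv, hL, ← heq]
    ring
  have hD2 : deriv (fun t => ∫ u in a..y₁, ∫ v in a..t, dprh a b F₀ f₀ θ₁ θ₂ θ₁' θ₂' u v) y₂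
      = F₀ y₁ ^ θ₁' * (θ₂ * (f₀ y₂ / F₀ y₂)) := by
    have hev : (fun t => ∫ u in a..y₁, ∫ v in a..t, dprh a b F₀ f₀ θ₁ θ₂ θ₁' θ₂' u v)
        =ᶠ[nhds y₂] (fun t => F₀ y₁ ^ θ₁' * (1 + θ₂ * (Real.log (F₀ t) - Real.log (F₀ y₁)))) := by
      filter_upwards [Ioo_mem_nhds h₂ h₃] with t ht
      exact dprh_cdf a b F₀ f₀ hderiv hmono hf₀pos hF₀pos hFa θ₁ θ₂ θ₁' θ₂' hθ₁ hθ₂ hθ₁' hθ₂'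
        heq y₁ t h₁ ht.1 ht.2
    rw [hev.deriv_eq]
    have h : HasDerivAt (fun t => F₀ y₁ ^ θ₁' * (1 + θ₂ * (Real.log (F₀ t) - Real.log (F₀ y₁))))
        (F₀ y₁ ^ θ₁' * (θ₂ * (f₀ y₂ / F₀ y₂))) y₂ := by
      have h0 := ((((hderiv y₂ hy₂).log hQ.ne').sub_const (Real.log (F₀ y₁))).const_mul θ₂).const_add 1
      have h1 := h0.const_mul (F₀ y₁ ^ θ₁')
      convert h1 using 1
    exact h.deriv
  rw [hF, hf, hD1, hD2, hlogdiv]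
  have hden2 : 0 < θ₁ + θ₂ * θ₁' * L := by
    have := mul_pos (mul_pos hθ₂ hθ₁') hLpos
    linarith
  have hden1 : (f₀ y₁ * F₀ y₁ ^ (θ₁' - 1) * (θ₁ + θ₁' * θ₂ * L)) *
      (F₀ y₁ ^ θ₁' * (θ₂ * (f₀ y₂ / F₀ y₂))) ≠ 0 := by
    have hr1 : 0 < F₀ y₁ ^ (θ₁' - 1) := Real.rpow_pos_of_pos hP _
    have hr2 : 0 < F₀ y₁ ^ θ₁' := Real.rpow_pos_of_pos hP _
    have h3 : 0 < θ₁ + θ₁' * θ₂ * L := by nlinarith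
    have : 0 < (f₀ y₁ * F₀ y₁ ^ (θ₁' - 1) * (θ₁ + θ₁' * θ₂ * L)) *
        (F₀ y₁ ^ θ₁' * (θ₂ * (f₀ y₂ / F₀ y₂))) := by positivity
    exact this.ne'
  rw [div_eq_div_iff hden1 hden2.ne']
  ring
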